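/- Deleting all chords of an even symmetric configuration from a chord diagram preserves the parity (evenness/oddness) of every remaining chord: a chord γ of D with no endpoint in the configuration is even in D if and only if it is even in the diagram D' obtained by the elementary cobordism. -/

import Mathlib

/-- Two chords `c = {c.1, c.2}` and `d = {d.1, d.2}` (each written with smaller
endpoint first) of a chord diagram are *linked* (interleaved) iff the endpoints
of one separate the endpoints of the other on the circle. -/
def Linked (c d : ℕ × ℕ) : Prop :=
  (c.1 < d.1 ∧ d.1 < c.2 ∧ c.2 < d.2) ∨ (d.1 < c.1 ∧ c.1 < d.2 ∧ d.2 < c.2)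

instance : DecidableRel Linked := fun c d => by unfold Linked; infer_instance

/-- A chord diagram on the `N` points `0, …, N-1` of a circle: a finite set of
chords, each recorded as an ordered pair (smaller endpoint, larger endpoint),
forming a perfect matching of `{0, …, N-1}`. -/
structure IsChordDiagram (N : ℕ) (D : Finset (ℕ × ℕ)) : Prop where
  lt : ∀ c ∈ D, c.1 < c.2 ∧ c.2 < N
  matching : ∀ x < N, ∃! c, c ∈ D ∧ (c.1 = x ∨ c.2 = x)

/-- `x` lies in (the set of points of) the configuration `C`, a finite set of
arcs of the circle, each arc recorded as the interval of points `[A.1, A.2]`. -/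
def InConfig (C : Finset (ℕ × ℕ)) (x : ℕ) : Prop :=
  ∃ A ∈ C, A.1 ≤ x ∧ x ≤ A.2

instance (C : Finset (ℕ × ℕ)) : DecidablePred (InConfig C) := fun x => by
  unfold InConfig; infer_instance

/-- The reflection involution of the configuration `C`: reflects each arc of
`C` along its radius and fixes all points outside the arcs. -/
noncomputable def reflectPt (C : Finset (ℕ × ℕ)) (x : ℕ) : ℕ :=
  ((C.toList.find? fun A => A.1 ≤ x && x ≤ A.2).map fun A => A.1 + A.2 - x).getD x

/-- Rewrite a pair of points as a chord (smaller endpoint first). -/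
def sortPair (p : ℕ × ℕ) : ℕ × ℕ := (min p.1 p.2, max p.1 p.2)

/-- The image of a chord under the reflection involution of the configuration. -/
noncomputable def reflectChord (C : Finset (ℕ × ℕ)) (c : ℕ × ℕ) : ℕ × ℕ :=
  sortPair (reflectPt C c.1, reflectPt C c.2)

/-- An even symmetric configuration `C` on the chord diagram `D` (on `N`
points): a finite family of pairwise disjoint arcs of the circle such that
each arc contains an even number of chord endpoints, every chord with one
endpoint in the arcs has both endpoints in the arcs, and the reflection
involution `i` of the arcs maps the chord diagram to itself, `i(D) = D`. -/
structure EvenSymConfig (N : ℕ) (D : Finset (ℕ × ℕ)) (C : Finset (ℕ × ℕ)) : Prop where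
  arcs : ∀ A ∈ C, A.1 ≤ A.2 ∧ A.2 < N
  disj : ∀ A ∈ C, ∀ B ∈ C, A ≠ B → A.2 < B.1 ∨ B.2 < A.1
  even : ∀ A ∈ C,
    Even (((D.biUnion fun c => ({c.1, c.2} : Finset ℕ)).filter
      fun x => A.1 ≤ x ∧ x ≤ A.2).card)
  closed : ∀ c ∈ D, (InConfig C c.1 ↔ InConfig C c.2)
  symm : ∀ c ∈ D, reflectChord C c ∈ D

lemma chord_ne_endpoints {N : ℕ} {D : Finset (ℕ × ℕ)} (hD : IsChordDiagram N D)
    {c d : ℕ × ℕ} (hc : c ∈ D) (hd : d ∈ D) (hne : c ≠ d) :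
    c.1 ≠ d.1 ∧ c.1 ≠ d.2 ∧ c.2 ≠ d.1 ∧ c.2 ≠ d.2 := by
  have hcN := hD.lt c hc
  have hdN := hD.lt d hd
  refine ⟨fun hx => hne ?_, fun hx => hne ?_, fun hx => hne ?_, fun hx => hne ?_⟩
  · exact (hD.matching c.1 (by omega)).unique ⟨hc, Or.inl rfl⟩ ⟨hd, Or.inl hx.symm⟩
  · exact (hD.matching c.1 (by omega)).unique ⟨hc, Or.inl rfl⟩ ⟨hd, Or.inr hx.symm⟩
  · exact (hD.matching c.2 (by omega)).unique ⟨hc, Or.inr rfl⟩ ⟨hd, Or.inl hx.symm⟩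
  · exact (hD.matching c.2 (by omega)).unique ⟨hc, Or.inr rfl⟩ ⟨hd, Or.inr hx.symm⟩

/-- Deleting all chords of an even symmetric configuration from a chord diagram
(an elementary cobordism) preserves the parity of every remaining chord: a
chord `γ` of `D` with no endpoint in the configuration is even in `D` iff it is
even in the resulting diagram.  Equivalently, the number of deleted chords
linked with `γ` is even. -/
theorem stmt_11 (N : ℕ) (D C : Finset (ℕ × ℕ)) (hD : IsChordDiagram N D)
    (h : EvenSymConfig N D C) (γ : ℕ × ℕ) (hγ : γ ∈ D) (hout : ¬ InConfig C γ.1) :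
    (Even ((D.filter fun d => Linked γ d).card) ↔
     Even (((D.filter fun c => ¬ InConfig C c.1).filter fun d => Linked γ d).card)) ∧
    Even (((D.filter fun c => InConfig C c.1).filter fun d => Linked γ d).card) := by
  obtain ⟨hγ12, hγ2N⟩ := hD.lt γ hγ
  have hout2 : ¬ InConfig C γ.2 := fun hh => hout ((h.closed γ hγ).mpr hh)
  set E : Finset ℕ := D.biUnion fun c => ({c.1, c.2} : Finset ℕ) with hE
  set T : Finset (ℕ × ℕ) := D.filter fun c => InConfig C c.1 with hT
  -- Step 1: the set of configuration endpoints strictly between γ.1 and γ.2 is even.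
  have hEint : Even ((E.filter fun x => InConfig C x ∧ (γ.1 < x ∧ x < γ.2)).card) := by
    have hsplit : E.filter (fun x => InConfig C x ∧ (γ.1 < x ∧ x < γ.2)) =
        C.biUnion fun A => E.filter fun x => (A.1 ≤ x ∧ x ≤ A.2) ∧ (γ.1 < x ∧ x < γ.2) := by
      ext x
      rw [Finset.mem_filter]
      simp only [Finset.mem_filter, Finset.mem_biUnion, InConfig]
      tauto
    rw [hsplit, Finset.card_biUnion]
    · apply Finset.even_sum
      intro A hA
      have hno1 : ¬ (A.1 ≤ γ.1 ∧ γ.1 ≤ A.2) := fun hh => hout ⟨A, hA, hh⟩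
      have hno2 : ¬ (A.1 ≤ γ.2 ∧ γ.2 ≤ A.2) := fun hh => hout2 ⟨A, hA, hh⟩
      by_cases hI : γ.1 < A.1 ∧ A.1 < γ.2
      · have heq : E.filter (fun x => (A.1 ≤ x ∧ x ≤ A.2) ∧ (γ.1 < x ∧ x < γ.2)) =
            E.filter fun x => A.1 ≤ x ∧ x ≤ A.2 := by
          apply Finset.filter_congr
          intro x _
          constructor
          · tauto
          · intro hx; exact ⟨hx, by omega⟩
        rw [heq]; exact h.even A hA
      · have heq : E.filter (fun x => (A.1 ≤ x ∧ x ≤ A.2) ∧ (γ.1 < x ∧ x < γ.2)) = ∅ := by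
          apply Finset.filter_false_of_mem
          intro x _
          omega
        rw [heq]; simp
    · intro A hA B hB hAB
      have := h.disj A hA B hB hAB
      rw [Function.onFun, Finset.disjoint_left]
      intro x hx hx'
      simp only [Finset.mem_filter] at hx hx'
      omega
  -- Step 2: this set is the disjoint union of the interval-endpoints of chords in T.
  have hbi : T.biUnion (fun c => ({c.1, c.2} : Finset ℕ).filter fun x => γ.1 < x ∧ x < γ.2)
      = E.filter fun x => InConfig C x ∧ (γ.1 < x ∧ x < γ.2) := by
    ext x
    simp only [Finset.mem_biUnion, Finset.mem_filter, hT, hE, Finset.mem_insert,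
      Finset.mem_singleton]
    constructor
    · rintro ⟨c, ⟨hcD, hcP⟩, hxc, hxI⟩
      refine ⟨⟨c, hcD, hxc⟩, ?_, hxI⟩
      rcases hxc with rfl | rfl
      · exact hcP
      · exact (h.closed c hcD).mp hcP
    · rintro ⟨⟨c, hcD, hxc⟩, hxC, hxI⟩
      refine ⟨c, ⟨hcD, ?_⟩, hxc, hxI⟩
      rcases hxc with rfl | rfl
      · exact hxC
      · exact (h.closed c hcD).mpr hxC
  have hdisjT : ∀ c ∈ T, ∀ d ∈ T, c ≠ d →
      Disjoint (({c.1, c.2} : Finset ℕ).filter fun x => γ.1 < x ∧ x < γ.2)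
        (({d.1, d.2} : Finset ℕ).filter fun x => γ.1 < x ∧ x < γ.2) := by
    intro c hc d hd hcd
    obtain ⟨hcD, _⟩ := Finset.mem_filter.mp hc
    obtain ⟨hdD, _⟩ := Finset.mem_filter.mp hd
    obtain ⟨e1, e2, e3, e4⟩ := chord_ne_endpoints hD hcD hdD hcd
    rw [Finset.disjoint_left]
    intro x hx hx'
    simp only [Finset.mem_filter, Finset.mem_insert, Finset.mem_singleton] at hx hx'
    omega
  have hsum : ∑ c ∈ T, (({c.1, c.2} : Finset ℕ).filter fun x => γ.1 < x ∧ x < γ.2).card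
      = (E.filter fun x => InConfig C x ∧ (γ.1 < x ∧ x < γ.2)).card := by
    rw [← hbi, Finset.card_biUnion hdisjT]
  -- Step 3: pointwise parity of each summand.
  have hpt : ∀ c ∈ T,
      (({c.1, c.2} : Finset ℕ).filter fun x => γ.1 < x ∧ x < γ.2).card % 2
      = if Linked γ c then 1 else 0 := by
    intro c hc
    obtain ⟨hcD, hcP⟩ := Finset.mem_filter.mp hc
    have hcne : c ≠ γ := fun e => hout (by rw [← e]; exact hcP)
    obtain ⟨e1, e2, e3, e4⟩ := chord_ne_endpoints hD hcD hγ hcne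
    have hc12 : c.1 < c.2 := (hD.lt c hcD).1
    rw [Finset.card_filter, Finset.sum_pair (Nat.ne_of_lt hc12)]
    by_cases hL : Linked γ c
    · rw [if_pos hL]; simp only [Linked] at hL; split_ifs <;> omega
    · rw [if_neg hL]; simp only [Linked] at hL; split_ifs <;> omega
  -- Combine: the number of deleted linked chords is even.
  have key : Even ((T.filter fun d => Linked γ d).card) := by
    rw [Nat.even_iff]
    have h1 : (T.filter fun d => Linked γ d).card
        = ∑ c ∈ T, if Linked γ c then 1 else 0 := Finset.card_filter _ _
    have h2 : (∑ c ∈ T, (({c.1, c.2} : Finset ℕ).filter fun x => γ.1 < x ∧ x < γ.2).card) % 2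
        = (∑ c ∈ T, if Linked γ c then 1 else 0) % 2 := by
      rw [Finset.sum_nat_mod, Finset.sum_congr rfl hpt]
    rw [h1, ← h2, hsum]
    exact Nat.even_iff.mp hEint
  refine ⟨?_, key⟩
  have hsplit := Finset.card_filter_add_card_filter_not
    (s := D.filter fun d => Linked γ d) (p := fun c => InConfig C c.1)
  have c1 : ((D.filter fun d => Linked γ d).filter fun c => InConfig C c.1)
      = T.filter fun d => Linked γ d := Finset.filter_comm _ _ _
  have c2 : ((D.filter fun d => Linked γ d).filter fun c => ¬ InConfig C c.1)
      = (D.filter fun c => ¬ InConfig C c.1).filter fun d => Linked γ d :=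
    Finset.filter_comm _ _ _
  rw [c1, c2] at hsplit
  rw [Nat.even_iff, Nat.even_iff]
  rw [Nat.even_iff] at key
  omega
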